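/- With the GLM notation below, for all θ, θ' ∈ ℝ^d the secant matrix is symmetric in its arguments, Q(θ, θ') = Q(θ', θ), and the Hessian is dominated in the Loewner order: H(θ) ⪯ (1 + M·D(θ − θ'))·Q(θ, θ'), i.e. xᵀH(θ)x ≤ (1 + M·D(θ − θ'))·xᵀQ(θ, θ')x for all x ∈ ℝ^d. -/

import Mathlib

open Matrix


lemma sum_mulVec' {d t : ℕ} (A : Fin t → Matrix (Fin d) (Fin d) ℝ) (x : Fin d → ℝ) :
    (∑ l, A l).mulVec x = ∑ l, (A l).mulVec x := by
  induction t with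
  | zero => simp [Matrix.mulVec]
  | succ n ih => rw [Fin.sum_univ_succ, Fin.sum_univ_succ, Matrix.add_mulVec, ih]

lemma dp_sum {d t : ℕ} (x : Fin d → ℝ) (v : Fin t → Fin d → ℝ) :
    x ⬝ᵥ (∑ l, v l) = ∑ l, x ⬝ᵥ v l := by
  induction t with
  | zero => simp
  | succ n ih => rw [Fin.sum_univ_succ, Fin.sum_univ_succ, dotProduct_add, ih]

lemma vmv_mulVec {d : ℕ} (v x : Fin d → ℝ) : (vecMulVec v v).mulVec x = (v ⬝ᵥ x) • v := by
  funext i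
  simp [mulVec, vecMulVec_apply, dotProduct, Finset.mul_sum, Finset.sum_mul, mul_comm, mul_assoc, mul_left_comm]

lemma quad_form {d t : ℕ} (c : Fin t → ℝ) (X : Fin t → Fin d → ℝ) (lam : ℝ) (x : Fin d → ℝ) :
    x ⬝ᵥ (∑ l, c l • vecMulVec (X l) (X l) + lam • (1:Matrix (Fin d) (Fin d) ℝ)).mulVec x
      = ∑ l, c l * (X l ⬝ᵥ x)^2 + lam * (x ⬝ᵥ x) := by
  rw [Matrix.add_mulVec, dotProduct_add, sum_mulVec', dp_sum]
  congr 1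
  · refine Finset.sum_congr rfl fun l _ => ?_
    rw [Matrix.smul_mulVec, vmv_mulVec, dotProduct_smul, dotProduct_smul, smul_eq_mul, smul_eq_mul]
    rw [dotProduct_comm x (X l)]
    ring
  · simp [Matrix.smul_mulVec, dotProduct_smul, smul_eq_mul]

section
variable {M : ℝ} {μ : ℝ → ℝ}
variable (hM : 0 < M) (hdiff : Differentiable ℝ μ) (hdiff2 : Differentiable ℝ (deriv μ))
  (hpos : ∀ u : ℝ, 0 < deriv μ u)
  (hsc : ∀ u : ℝ, |deriv (deriv μ) u| ≤ M * deriv μ u)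

include hdiff2 hpos hsc in
lemma ptwise_le {u v : ℝ} (h : u ≤ v) :
    deriv μ u * Real.exp (-(M * (v - u))) ≤ deriv μ v := by
  set g : ℝ → ℝ := fun w => deriv μ w * Real.exp (M * w) with hg
  have hgd : ∀ w, HasDerivAt g
      (deriv (deriv μ) w * Real.exp (M * w) + deriv μ w * (Real.exp (M * w) * M)) w := by
    intro w
    have h := (hdiff2.differentiableAt.hasDerivAt).mul (((hasDerivAt_id' w).const_mul M).exp)
    rw [mul_one] at h
    exact h
  have hmono : Monotone g := by
    apply monotone_of_deriv_nonneg (fun w => (hgd w).differentiableAt)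
    intro w
    rw [(hgd w).deriv]
    have h1 := abs_le.mp (hsc w)
    nlinarith [Real.exp_pos (M * w), (hpos w)]
  have := hmono h
  simp only [hg] at this
  have hexp : Real.exp (-(M * (v - u))) * Real.exp (M * v) = Real.exp (M * u) := by
    rw [← Real.exp_add]; ring_nf
  exact (mul_le_mul_iff_of_pos_right (Real.exp_pos (M * v))).mp (by rw [mul_assoc, hexp]; exact this)

include hdiff2 hpos hsc in
lemma ptwise_ge {u v : ℝ} (h : v ≤ u) :
    deriv μ u * Real.exp (-(M * (u - v))) ≤ deriv μ v := by
  set g : ℝ → ℝ := fun w => deriv μ w * Real.exp (-(M * w)) with hg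
  have hgd : ∀ w, HasDerivAt g
      (deriv (deriv μ) w * Real.exp (-(M * w)) + deriv μ w * (Real.exp (-(M * w)) * (-M))) w := by
    intro w
    have h := (hdiff2.differentiableAt.hasDerivAt).mul (((hasDerivAt_id' w).const_mul M).neg.exp)
    rw [mul_one] at h
    exact h
  have hanti : Antitone g := by
    apply antitone_of_deriv_nonpos (fun w => (hgd w).differentiableAt)
    intro w
    rw [(hgd w).deriv]
    have h1 := abs_le.mp (hsc w)
    nlinarith [Real.exp_pos (-(M * w)), (hpos w)]
  have := hanti h
  simp only [hg] at this
  have hexp : Real.exp (-(M * (u - v))) * Real.exp (-(M * v)) = Real.exp (-(M * u)) := by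
    rw [← Real.exp_add]; ring_nf
  exact (mul_le_mul_iff_of_pos_right (Real.exp_pos (-(M * v)))).mp (by rw [mul_assoc, hexp]; exact this)

include hM hdiff hdiff2 hpos hsc in
-- For u' < u : μ u - μ u' ≥ C (1 - e^{M(u'-u)})/M
lemma secant_num_lt {u u' : ℝ} (h : u' < u) :
    deriv μ u * (1 - Real.exp (M * (u' - u))) / M ≤ μ u - μ u' := by
  set C := deriv μ u with hC
  set f : ℝ → ℝ := fun v => μ u - μ v - C * (1 - Real.exp (M * (v - u))) / M with hf
  have hfd : ∀ v, HasDerivAt f (-(deriv μ v) + C * Real.exp (M * (v - u))) v := by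
    intro v
    have h3 : HasDerivAt (fun v => C * (1 - Real.exp (M * (v - u))) / M)
        (C * (-(Real.exp (M * (v - u)) * (M * 1))) / M) v :=
      ((((((hasDerivAt_id v).sub_const u).const_mul M).exp).const_sub 1).const_mul C).div_const M
    have h4 := ((hdiff.differentiableAt.hasDerivAt (x := v)).const_sub (μ u)).sub h3
    convert h4 using 1
    have hM0 : M ≠ 0 := hM.ne'
    rfl
    rfl
    rfl
    rw [mul_one, mul_neg, neg_div, sub_neg_eq_add, ← mul_assoc, mul_div_cancel_right₀ _ hM.ne']
  have hanti : AntitoneOn f (Set.Iic u) := by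
    apply antitoneOn_of_deriv_nonpos (convex_Iic u)
      (Continuous.continuousOn (by
        have : Differentiable ℝ f := fun v => (hfd v).differentiableAt
        exact this.continuous))
      (fun v _ => ((hfd v).differentiableAt.differentiableWithinAt))
    intro v hv
    rw [interior_Iic] at hv
    rw [(hfd v).deriv]
    have := ptwise_ge hdiff2 hpos hsc (μ := μ) (le_of_lt hv)
    have heq : -(M * (u - v)) = M * (v - u) := by ring
    rw [heq] at this
    linarith
  have h0 : f u = 0 := by simp [hf]
  have h1 : f u ≤ f u' := hanti (Set.mem_Iic.mpr (le_of_lt h)) (Set.mem_Iic.mpr le_rfl) (le_of_lt h)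
  rw [h0] at h1
  simp only [hf] at h1
  linarith

include hM hdiff hdiff2 hpos hsc in
-- For u < u' : μ u' - μ u ≥ C (1 - e^{M(u-u')})/M
lemma secant_num_gt {u u' : ℝ} (h : u < u') :
    deriv μ u * (1 - Real.exp (M * (u - u'))) / M ≤ μ u' - μ u := by
  set C := deriv μ u with hC
  set f : ℝ → ℝ := fun v => μ v - μ u - C * (1 - Real.exp (-(M * (v - u)))) / M with hf
  have hfd : ∀ v, HasDerivAt f (deriv μ v - C * Real.exp (-(M * (v - u)))) v := by
    intro v
    have h3 : HasDerivAt (fun v => C * (1 - Real.exp (-(M * (v - u)))) / M)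
        (C * (-(Real.exp (-(M * (v - u))) * (-(M * 1)))) / M) v :=
      ((((((hasDerivAt_id v).sub_const u).const_mul M).neg.exp).const_sub 1).const_mul C).div_const M
    have h4 := ((hdiff.differentiableAt.hasDerivAt (x := v)).sub_const (μ u)).sub h3
    convert h4 using 1
    have hM0 : M ≠ 0 := hM.ne'
    rfl
    rfl
    rfl
    simp only [mul_one, mul_neg, neg_neg]
    rw [← mul_assoc, mul_div_cancel_right₀ _ hM.ne']
  have hmono : MonotoneOn f (Set.Ici u) := by
    apply monotoneOn_of_deriv_nonneg (convex_Ici u)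
      (Continuous.continuousOn (by
        have : Differentiable ℝ f := fun v => (hfd v).differentiableAt
        exact this.continuous))
      (fun v _ => ((hfd v).differentiableAt.differentiableWithinAt))
    intro v hv
    rw [interior_Ici] at hv
    rw [(hfd v).deriv]
    have := ptwise_le hdiff2 hpos hsc (μ := μ) (le_of_lt hv)
    linarith
  have h0 : f u = 0 := by simp [hf]
  have h1 : f u ≤ f u' := hmono (Set.mem_Ici.mpr le_rfl) (Set.mem_Ici.mpr (le_of_lt h)) (le_of_lt h)
  rw [h0] at h1
  simp only [hf] at h1
  have heq : -(M * (u' - u)) = M * (u - u') := by ring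
  rw [heq] at h1
  linarith

include hM hdiff hdiff2 hpos hsc in
lemma secant_key (u u' : ℝ) (A : ℝ)
    (hA : A = if u = u' then deriv μ u else (μ u - μ u') / (u - u')) :
    0 < A ∧ deriv μ u ≤ (1 + M * |u - u'|) * A := by
  rcases eq_or_ne u u' with rfl | hne
  · simp only [if_pos rfl] at hA
    subst hA
    refine ⟨hpos u, ?_⟩
    simp
  rw [if_neg hne] at hA
  set C := deriv μ u with hC
  have hCpos : 0 < C := hpos u
  rcases lt_or_gt_of_ne hne with hlt | hgt
  -- case u < u'
  · set δ := u' - u with hδ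
    have hδpos : 0 < δ := by simp [hδ]; linarith
    have habs : |u - u'| = δ := by rw [abs_of_neg (by linarith)]; ring
    have hnum := secant_num_gt hM hdiff hdiff2 hpos hsc hlt
    set E := Real.exp (M * (u - u')) with hE
    have hE1 : E < 1 := by
      rw [hE, ← Real.exp_zero]
      exact Real.exp_lt_exp.mpr (by nlinarith)
    have hEpos : 0 < E := Real.exp_pos _
    have hEmul : (1 + M * δ) * E ≤ 1 := by
      have h1 : M * δ + 1 ≤ Real.exp (M * δ) := Real.add_one_le_exp (M * δ)
      have h2 : E * Real.exp (M * δ) = 1 := by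
        rw [hE, ← Real.exp_add]
        norm_num
        rw [hδ]; ring
      nlinarith
    have hAval : A = (μ u' - μ u) / δ := by
      rw [hA]
      rw [div_eq_div_iff (by linarith) (by linarith)]
      ring
    have hAδ : C * (1 - E) / M ≤ A * δ := by
      rw [hAval, div_mul_cancel₀ _ (by linarith : δ ≠ 0)]
      exact hnum
    have hApos : 0 < A := by
      have h6 : 0 < C * (1 - E) / M := div_pos (mul_pos hCpos (by linarith)) hM
      have h7 := lt_of_lt_of_le h6 hAδ
      nlinarith
    refine ⟨hApos, ?_⟩
    rw [habs]
    have key : C * (M * δ) ≤ (1 + M * δ) * (M * (A * δ)) := by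
      have h5 : C * (1 - E) ≤ M * (A * δ) := by
        rw [div_le_iff₀ hM] at hAδ
        linarith [hAδ]
      calc C * (M * δ) ≤ C * ((1 + M * δ) * (1 - E)) := by nlinarith
        _ = (1 + M * δ) * (C * (1 - E)) := by ring
        _ ≤ (1 + M * δ) * (M * (A * δ)) := by
            apply mul_le_mul_of_nonneg_left h5
            nlinarith
    have hMδ : 0 < M * δ := mul_pos hM hδpos
    nlinarith
  -- case u' < u
  · set δ := u - u' with hδ
    have hδpos : 0 < δ := by simp [hδ]; linarith
    have habs : |u - u'| = δ := abs_of_pos (by linarith)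
    have hnum := secant_num_lt hM hdiff hdiff2 hpos hsc hgt
    set E := Real.exp (M * (u' - u)) with hE
    have hE1 : E < 1 := by
      rw [hE, ← Real.exp_zero]
      exact Real.exp_lt_exp.mpr (by nlinarith)
    have hEpos : 0 < E := Real.exp_pos _
    have hEmul : (1 + M * δ) * E ≤ 1 := by
      have h1 : M * δ + 1 ≤ Real.exp (M * δ) := Real.add_one_le_exp (M * δ)
      have h2 : E * Real.exp (M * δ) = 1 := by
        rw [hE, ← Real.exp_add]
        norm_num
        rw [hδ]; ring
      nlinarith
    have hAval : A = (μ u - μ u') / δ := by rw [hA]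
    have hAδ : C * (1 - E) / M ≤ A * δ := by
      rw [hAval, div_mul_cancel₀ _ (by linarith : δ ≠ 0)]
      exact hnum
    have hApos : 0 < A := by
      have h6 : 0 < C * (1 - E) / M := div_pos (mul_pos hCpos (by linarith)) hM
      have h7 := lt_of_lt_of_le h6 hAδ
      nlinarith
    refine ⟨hApos, ?_⟩
    rw [habs]
    have key : C * (M * δ) ≤ (1 + M * δ) * (M * (A * δ)) := by
      have h5 : C * (1 - E) ≤ M * (A * δ) := by
        rw [div_le_iff₀ hM] at hAδ
        linarith [hAδ]
      calc C * (M * δ) ≤ C * ((1 + M * δ) * (1 - E)) := by nlinarith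
        _ = (1 + M * δ) * (C * (1 - E)) := by ring
        _ ≤ (1 + M * δ) * (M * (A * δ)) := by
            apply mul_le_mul_of_nonneg_left h5
            nlinarith
    have hMδ : 0 < M * δ := mul_pos hM hδpos
    nlinarith

/-- Loewner-order domination of the GLM Hessian by the secant matrix:
`Q(θ, θ') = Q(θ', θ)` and `H(θ) ⪯ (1 + M·D(θ − θ'))·Q(θ, θ')`. -/
theorem hessian_le_secant_matrix
    {d t : ℕ} (M lam : ℝ) (hM : 0 < M) (hlam : 0 < lam)
    (μ : ℝ → ℝ) (hdiff : Differentiable ℝ μ) (hdiff2 : Differentiable ℝ (deriv μ))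
    (hpos : ∀ u : ℝ, 0 < deriv μ u)
    (hsc : ∀ u : ℝ, |deriv (deriv μ) u| ≤ M * deriv μ u)
    (𝒳 : Finset (Fin d → ℝ)) (h𝒳ne : 𝒳.Nonempty)
    (h𝒳norm : ∀ X ∈ 𝒳, Real.sqrt (∑ i, X i ^ 2) ≤ 1)
    (X : Fin t → (Fin d → ℝ)) (hX : ∀ l, X l ∈ 𝒳)
    (α : ℝ → ℝ → ℝ)
    (hα : ∀ u u' : ℝ, α u u' = if u = u' then deriv μ u else (μ u - μ u') / (u - u'))
    (H : (Fin d → ℝ) → Matrix (Fin d) (Fin d) ℝ)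
    (hH : ∀ θ, H θ = ∑ l, deriv μ (X l ⬝ᵥ θ) • vecMulVec (X l) (X l)
        + lam • (1 : Matrix (Fin d) (Fin d) ℝ))
    (Q : (Fin d → ℝ) → (Fin d → ℝ) → Matrix (Fin d) (Fin d) ℝ)
    (hQ : ∀ θ θ', Q θ θ' = ∑ l, α (X l ⬝ᵥ θ) (X l ⬝ᵥ θ') • vecMulVec (X l) (X l)
        + lam • (1 : Matrix (Fin d) (Fin d) ℝ))
    (D : (Fin d → ℝ) → ℝ)
    (hD : ∀ v, D v = 𝒳.sup' h𝒳ne (fun Y => |Y ⬝ᵥ v|)) :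
    ∀ θ θ' : Fin d → ℝ,
      Q θ θ' = Q θ' θ ∧
      ∀ x : Fin d → ℝ,
        x ⬝ᵥ (H θ).mulVec x ≤ (1 + M * D (θ - θ')) * (x ⬝ᵥ (Q θ θ').mulVec x) := by
  intro θ θ'
  constructor
  · rw [hQ, hQ]
    congr 1
    refine Finset.sum_congr rfl fun l _ => ?_
    congr 1
    rw [hα, hα]
    rcases eq_or_ne (X l ⬝ᵥ θ) (X l ⬝ᵥ θ') with h | h
    · rw [if_pos h, if_pos h.symm, h]
    · rw [if_neg h, if_neg (Ne.symm h)]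
      rw [div_eq_div_iff (sub_ne_zero.mpr h) (sub_ne_zero.mpr (Ne.symm h))]
      ring
  · intro x
    rw [hH, hQ, quad_form, quad_form]
    have hDnn : 0 ≤ D (θ - θ') := by
      obtain ⟨Y, hY⟩ := h𝒳ne
      rw [hD]
      exact le_trans (abs_nonneg _) (Finset.le_sup' (fun Y => |Y ⬝ᵥ (θ - θ')|) hY)
    have hbound : ∀ l, |X l ⬝ᵥ θ - X l ⬝ᵥ θ'| ≤ D (θ - θ') := by
      intro l
      rw [hD, show X l ⬝ᵥ θ - X l ⬝ᵥ θ' = X l ⬝ᵥ (θ - θ') by rw [dotProduct_sub]]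
      exact Finset.le_sup' (fun Y => |Y ⬝ᵥ (θ - θ')|) (hX l)
    rw [mul_add]
    apply add_le_add
    · rw [Finset.mul_sum]
      apply Finset.sum_le_sum
      intro l _
      obtain ⟨hApos, hAle⟩ := secant_key hM hdiff hdiff2 hpos hsc (X l ⬝ᵥ θ) (X l ⬝ᵥ θ')
        (α (X l ⬝ᵥ θ) (X l ⬝ᵥ θ')) (hα _ _)
      have hsq : (0:ℝ) ≤ (X l ⬝ᵥ x)^2 := sq_nonneg _
      have hle : deriv μ (X l ⬝ᵥ θ) ≤ (1 + M * D (θ - θ')) * α (X l ⬝ᵥ θ) (X l ⬝ᵥ θ') := by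
        refine le_trans hAle ?_
        apply mul_le_mul_of_nonneg_right _ (le_of_lt hApos)
        have := hbound l
        nlinarith
      nlinarith
    · have hxx : (0:ℝ) ≤ x ⬝ᵥ x :=
        Finset.sum_nonneg fun i _ => mul_self_nonneg _
      nlinarith [mul_nonneg (mul_nonneg hM.le hDnn) (mul_nonneg hlam.le hxx)]
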